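/- Let T be a p×p real matrix every eigenvalue of which, viewed over ℂ, has strictly negative real part. Then T is invertible, the matrix-valued function z ↦ exp(zT) is (entrywise) integrable on (0,∞), and ∫₀^∞ exp(zT) dz = (−T)⁻¹ (entrywise Bochner integral). -/

import Mathlib

open Matrix MeasureTheory NormedSpace Set Filter Module Topology

namespace IntegralMatrixExpAux

open scoped Matrix.Norms.Operator

variable {p : ℕ} (T : Matrix (Fin p) (Fin p) ℝ)

lemma exp_map (z : ℝ) :
    (exp (z • T)).map (algebraMap ℝ ℂ) = exp ((z : ℂ) • T.map (algebraMap ℝ ℂ)) := by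
  have h1 : (exp (z • T)).map (algebraMap ℝ ℂ)
      = exp ((z • T).map (algebraMap ℝ ℂ)) :=
    map_exp (𝔸 := Matrix (Fin p) (Fin p) ℝ) (𝔹 := Matrix (Fin p) (Fin p) ℂ)
      ((algebraMap ℝ ℂ).mapMatrix)
      (Continuous.matrix_map continuous_id Complex.continuous_ofReal) _
  have h2 : (z • T).map (algebraMap ℝ ℂ) = (z : ℂ) • T.map (algebraMap ℝ ℂ) := by
    ext i j
    simp [Matrix.map_apply, Complex.real_smul]
  rw [h1, h2]

lemma exp_entry_re (z : ℝ) (i j : Fin p) :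
    exp (z • T) i j = (exp ((z : ℂ) • T.map (algebraMap ℝ ℂ)) i j).re := by
  rw [← exp_map]
  simp [Matrix.map_apply]

lemma exists_decomp (hT : ∀ μ ∈ spectrum ℂ (T.map (algebraMap ℝ ℂ)), μ.re < 0) :
    ∃ (S : Finset ℂ) (C : ℂ → ℕ → Matrix (Fin p) (Fin p) ℂ),
      (∀ μ ∈ S, μ.re < 0) ∧
      ∀ z : ℝ, exp ((z : ℂ) • T.map (algebraMap ℝ ℂ)) =
        ∑ μ ∈ S, ∑ k ∈ Finset.range p, (Complex.exp (z * μ) * (z : ℂ) ^ k) • C μ k := by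
  classical
  set A : Matrix (Fin p) (Fin p) ℂ := T.map (algebraMap ℝ ℂ) with hA
  set f : Module.End ℂ (Fin p → ℂ) := Matrix.toLinAlgEquiv' A with hf
  have htop : ⨆ μ : ℂ, f.maxGenEigenspace μ = ⊤ := Module.End.iSup_maxGenEigenspace_eq_top f
  have hmem : ∀ j : Fin p, (Pi.single j 1 : Fin p → ℂ) ∈ ⨆ μ : ℂ, f.maxGenEigenspace μ := by
    intro j; rw [htop]; trivial
  choose w hw hwsum using fun j : Fin p =>
    (Submodule.mem_iSup_iff_exists_finsupp (fun μ : ℂ => f.maxGenEigenspace μ) _).mp (hmem j)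
  set S : Finset ℂ := Finset.univ.biUnion (fun j : Fin p => (w j).support) with hS
  set N : ℂ → Matrix (Fin p) (Fin p) ℂ := fun μ => A - μ • 1 with hN
  set W : ℂ → Matrix (Fin p) (Fin p) ℂ := fun μ => Matrix.of (fun i j => w j μ i) with hW
  have hker : ∀ (μ : ℂ) (j : Fin p), (N μ ^ p) *ᵥ (w j μ) = 0 := by
    intro μ j
    have h1 : w j μ ∈ f.genEigenspace μ (Module.finrank ℂ (Fin p → ℂ)) := by
      rw [← Module.End.maxGenEigenspace_eq_genEigenspace_finrank]; exact hw j μ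
    have hfr : Module.finrank ℂ (Fin p → ℂ) = p := by simp
    rw [hfr] at h1
    have h2 : ((f - μ • 1) ^ p) (w j μ) = 0 := Module.End.mem_genEigenspace_nat.mp h1
    have h3 : f - μ • 1 = Matrix.toLinAlgEquiv' (N μ) := by
      rw [hN, hf]; simp [map_sub, _root_.map_smul]
    rw [h3] at h2
    have h4 : (Matrix.toLinAlgEquiv' (N μ) ^ p) (w j μ)
        = Matrix.toLinAlgEquiv' (N μ ^ p) (w j μ) := by
      rw [map_pow]
    rw [h4, Matrix.toLinAlgEquiv'_apply] at h2
    exact h2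
  have hW2 : ∀ μ : ℂ, N μ ^ p * W μ = 0 := by
    intro μ; ext i j
    have := congrFun (hker μ j) i
    simpa [Matrix.mul_apply, Matrix.mulVec, dotProduct, hW] using this
  have hW1 : ∑ μ ∈ S, W μ = 1 := by
    ext i j
    have h1 : ∑ μ ∈ S, w j μ = Pi.single j 1 := by
      rw [← hwsum j, Finsupp.sum]
      exact (Finset.sum_subset (fun μ hμ => Finset.mem_biUnion.mpr ⟨j, Finset.mem_univ j, hμ⟩)
        (fun μ _ hμ => Finsupp.notMem_support_iff.mp hμ)).symm
    have h2 := congrFun h1 i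
    simp only [Finset.sum_apply] at h2
    simp only [Matrix.sum_apply, hW, Matrix.of_apply, h2, Matrix.one_apply, Pi.single_apply]
  refine ⟨S, fun μ k => ((k.factorial : ℂ)⁻¹) • (N μ ^ k * W μ), ?_, ?_⟩
  · intro μ hμ
    obtain ⟨j, -, hj⟩ := Finset.mem_biUnion.mp hμ
    have hne : f.HasUnifEigenvalue μ ⊤ := by
      intro hbot
      have h5 : w j μ ∈ (⊥ : Submodule ℂ (Fin p → ℂ)) := hbot ▸ hw j μ
      exact Finsupp.mem_support_iff.mp hj ((Submodule.mem_bot ℂ).mp h5)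
    have hev : f.HasUnifEigenvalue μ 1 := Module.End.HasUnifEigenvalue.lt zero_lt_one hne
    have hsp : μ ∈ spectrum ℂ f := hev.mem_spectrum
    rw [hf, AlgEquiv.spectrum_eq] at hsp
    exact hT μ hsp
  · intro z
    have key : ∀ μ : ℂ, exp ((z:ℂ) • A) * W μ
        = ∑ k ∈ Finset.range p, (Complex.exp ((z:ℂ) * μ) * (z:ℂ)^k) •
            (((k.factorial : ℂ)⁻¹) • (N μ ^ k * W μ)) := by
      intro μ
      have hsplit : (z:ℂ) • A = ((z:ℂ) * μ) • (1 : Matrix (Fin p) (Fin p) ℂ) + (z:ℂ) • N μ := by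
        simp [hN, smul_sub, smul_smul]
      have hcomm : Commute (((z:ℂ) * μ) • (1 : Matrix (Fin p) (Fin p) ℂ)) ((z:ℂ) • N μ) :=
        ((Commute.one_left _).smul_left _).smul_right _
      have h1 : exp (((z:ℂ) * μ) • (1 : Matrix (Fin p) (Fin p) ℂ))
          = Complex.exp ((z:ℂ) * μ) • 1 := by
        rw [← Algebra.algebraMap_eq_smul_one, ← Algebra.algebraMap_eq_smul_one,
          Complex.exp_eq_exp_ℂ]
        exact (algebraMap_exp_comm (𝕂 := ℂ) (𝔸 := Matrix (Fin p) (Fin p) ℂ) _).symm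
      have hsumm : Summable (fun k : ℕ => (((k.factorial:ℂ))⁻¹ * (z:ℂ)^k) • (N μ ^ k)) := by
        have hs := expSeries_summable' (𝕂 := ℂ) ((z:ℂ) • N μ)
        refine hs.congr fun k => ?_
        rw [smul_pow, smul_smul]
      have hexp : exp ((z:ℂ) • N μ)
          = ∑' k : ℕ, (((k.factorial:ℂ))⁻¹ * (z:ℂ)^k) • (N μ ^ k) := by
        rw [exp_eq_tsum (𝕂 := ℂ)]
        exact tsum_congr fun k => by rw [smul_pow, smul_smul]
      have h2 : exp ((z:ℂ) • N μ) * W μ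
          = ∑ k ∈ Finset.range p, (((k.factorial:ℂ))⁻¹ * (z:ℂ)^k) • (N μ ^ k * W μ) := by
        set R := LinearMap.toContinuousLinearMap (LinearMap.mulRight ℂ (W μ)) with hRdef
        have hRapp : ∀ (M : Matrix (Fin p) (Fin p) ℂ), R M = M * W μ := fun M => rfl
        have hR := R.map_tsum hsumm
        rw [hexp, ← hRapp, hR]
        have hterm : ∀ k : ℕ, R ((((k.factorial:ℂ))⁻¹ * (z:ℂ)^k) • (N μ ^ k))
            = (((k.factorial:ℂ))⁻¹ * (z:ℂ)^k) • (N μ ^ k * W μ) := by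
          intro k; rw [_root_.map_smul, hRapp]
        simp_rw [hterm]
        refine tsum_eq_sum fun k hk => ?_
        have hkp : p ≤ k := by simpa using hk
        have hsplit' : N μ ^ k = N μ ^ (k - p) * N μ ^ p := by rw [← pow_add]; congr 1; omega
        rw [hsplit', mul_assoc, hW2, mul_zero, smul_zero]
      rw [hsplit, Matrix.exp_add_of_commute _ _ hcomm, h1, smul_mul_assoc, one_mul, smul_mul_assoc, h2,
        Finset.smul_sum]
      refine Finset.sum_congr rfl fun k _ => ?_
      rw [smul_smul, smul_smul]
      congr 1
      ring
    calc exp ((z:ℂ) • A) = exp ((z:ℂ) • A) * ∑ μ ∈ S, W μ := by rw [hW1, mul_one]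
      _ = ∑ μ ∈ S, exp ((z:ℂ) • A) * W μ := Finset.mul_sum _ _ _
      _ = _ := Finset.sum_congr rfl fun μ _ => key μ

lemma norm_map_eq (B : Matrix (Fin p) (Fin p) ℝ) : ‖B.map (algebraMap ℝ ℂ)‖ = ‖B‖ := by
  rw [Matrix.linfty_opNorm_def, Matrix.linfty_opNorm_def]
  norm_cast
  refine congrArg _ (funext fun i => Finset.sum_congr rfl fun j _ => ?_)
  simp [Matrix.map_apply]

lemma int_pow_exp (k : ℕ) {a : ℝ} (ha : a < 0) :
    IntegrableOn (fun z : ℝ => z ^ k * Real.exp (a * z)) (Ioi 0) := by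
  have h := integrableOn_rpow_mul_exp_neg_mul_rpow (s := (k : ℝ)) (p := 1) (b := -a)
    (by exact neg_one_lt_zero.trans_le (Nat.cast_nonneg k)) zero_lt_one (by linarith)
  refine h.congr_fun (fun x hx => ?_) measurableSet_Ioi
  beta_reduce
  rw [Real.rpow_natCast, Real.rpow_one, neg_neg]

lemma tend_pow_exp (k : ℕ) {a : ℝ} (ha : a < 0) :
    Tendsto (fun z : ℝ => z ^ k * Real.exp (a * z)) atTop (𝓝 0) := by
  have h1 : Tendsto (fun y : ℝ => y ^ k * Real.exp (-y)) atTop (𝓝 0) :=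
    Real.tendsto_pow_mul_exp_neg_atTop_nhds_zero k
  have h2 : Tendsto (fun z : ℝ => -a * z) atTop atTop :=
    Tendsto.const_mul_atTop (by linarith) tendsto_id
  have h3 := (h1.comp h2).const_mul (((-a) ^ k)⁻¹)
  rw [mul_zero] at h3
  refine h3.congr fun z => ?_
  have hak : (-a) ^ k ≠ 0 := pow_ne_zero _ (by linarith)
  simp only [Function.comp]
  rw [mul_pow, neg_mul, neg_neg]
  field_simp

lemma exists_bound (hT : ∀ μ ∈ spectrum ℂ (T.map (algebraMap ℝ ℂ)), μ.re < 0) :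
    ∃ g : ℝ → ℝ, IntegrableOn g (Ioi 0) ∧ Tendsto g atTop (𝓝 0) ∧
      ∀ z ∈ Ioi (0 : ℝ), ‖exp (z • T)‖ ≤ g z := by
  obtain ⟨S, C, hS, hdec⟩ := exists_decomp T hT
  refine ⟨fun z => ∑ μ ∈ S, ∑ k ∈ Finset.range p,
    ‖C μ k‖ * (z ^ k * Real.exp (μ.re * z)), ?_, ?_, ?_⟩
  · apply MeasureTheory.integrable_finset_sum
    intro μ hμ
    apply MeasureTheory.integrable_finset_sum
    intro k _
    exact (int_pow_exp k (hS μ hμ)).const_mul _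
  · have := tendsto_finset_sum S (f := fun μ (z : ℝ) => ∑ k ∈ Finset.range p,
      ‖C μ k‖ * (z ^ k * Real.exp (μ.re * z))) (a := fun _ => 0) (fun μ hμ => by
        have := tendsto_finset_sum (Finset.range p)
          (f := fun k (z : ℝ) => ‖C μ k‖ * (z ^ k * Real.exp (μ.re * z)))
          (a := fun _ => 0) (fun k _ => by
            have h := (tend_pow_exp k (hS μ hμ)).const_mul (‖C μ k‖)
            rw [mul_zero] at h
            exact h)
        simpa using this)
    simpa using this
  · intro z hz
    have hz0 : (0 : ℝ) < z := hz
    rw [← norm_map_eq, exp_map, hdec z]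
    refine (norm_sum_le _ _).trans ?_
    refine Finset.sum_le_sum fun μ hμ => ?_
    refine (norm_sum_le _ _).trans ?_
    refine Finset.sum_le_sum fun k hk => ?_
    rw [norm_smul, norm_mul, norm_pow]
    have h1 : ‖Complex.exp ((z : ℂ) * μ)‖ = Real.exp (μ.re * z) := by
      rw [Complex.norm_exp]
      congr 1
      simp [Complex.mul_re, mul_comm]
    have h2 : ‖(z : ℂ)‖ = z := by
      rw [Complex.norm_real, Real.norm_eq_abs, abs_of_pos hz0]
    rw [h1, h2]
    exact le_of_eq (by ring)

lemma isUnit_of_spectrum (hT : ∀ μ ∈ spectrum ℂ (T.map (algebraMap ℝ ℂ)), μ.re < 0) :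
    IsUnit T := by
  have h0 : (0 : ℂ) ∉ spectrum ℂ (T.map (algebraMap ℝ ℂ)) := fun h =>
    lt_irrefl (0 : ℝ) (by simpa using hT 0 h)
  have hU : IsUnit (T.map (algebraMap ℝ ℂ)) := spectrum.zero_notMem_iff ℂ |>.mp h0
  have hdet : IsUnit ((T.map (algebraMap ℝ ℂ)).det) := (Matrix.isUnit_iff_isUnit_det _).mp hU
  have hdet2 : IsUnit (algebraMap ℝ ℂ T.det) := by
    rw [RingHom.map_det]
    exact hdet
  have hne : T.det ≠ 0 := by
    intro h
    rw [h] at hdet2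
    simp at hdet2
  exact (Matrix.isUnit_iff_isUnit_det T).mpr (isUnit_iff_ne_zero.mpr hne)

noncomputable def entryCLM (i j : Fin p) : Matrix (Fin p) (Fin p) ℝ →L[ℝ] ℝ :=
  LinearMap.toContinuousLinearMap
    { toFun := fun A => A i j
      map_add' := fun _ _ => rfl
      map_smul' := fun _ _ => rfl }

lemma main (hT : ∀ μ ∈ spectrum ℂ (T.map (algebraMap ℝ ℂ)), μ.re < 0) :
    IsUnit T ∧
    (∀ i j : Fin p, IntegrableOn (fun z : ℝ => exp (z • T) i j) (Ioi 0)) ∧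
    ∀ i j : Fin p, ∫ z in Ioi (0 : ℝ), exp (z • T) i j = (-T)⁻¹ i j := by
  obtain ⟨g, hg_int, hg_tend, hg_bd⟩ := exists_bound T hT
  letI : TopologicalSpace (Matrix (Fin p) (Fin p) ℝ) := PseudoMetricSpace.toUniformSpace.toTopologicalSpace
  have hunit := isUnit_of_spectrum T hT
  have hdet : IsUnit T.det := (Matrix.isUnit_iff_isUnit_det T).mp hunit
  have hcont : Continuous fun z : ℝ => exp (z • T) :=
    exp_continuous.comp (continuous_id.smul continuous_const)
  have hInt : IntegrableOn (fun z : ℝ => exp (z • T)) (Ioi 0) := by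
    refine Integrable.mono' hg_int hcont.aestronglyMeasurable.restrict ?_
    exact (ae_restrict_iff' measurableSet_Ioi).mpr (Filter.Eventually.of_forall hg_bd)
  have hTend0 : Tendsto (fun z : ℝ => exp (z • T)) atTop (𝓝 (0 : Matrix (Fin p) (Fin p) ℝ)) := by
    refine squeeze_zero_norm' ?_ hg_tend
    filter_upwards [eventually_gt_atTop (0 : ℝ)] with z hz using hg_bd z hz
  have hder : ∀ z : ℝ, HasDerivAt (fun z : ℝ => T⁻¹ * exp (z • T)) (exp (z • T)) z := by
    intro z
    have h := (hasDerivAt_exp_smul_const' (𝕂 := ℝ)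
      (𝔸 := Matrix (Fin p) (Fin p) ℝ) T z).const_mul T⁻¹
    simpa [← mul_assoc, Matrix.nonsing_inv_mul T hdet] using h
  have hcont2 : Continuous fun z : ℝ => T⁻¹ * exp (z • T) := continuous_const.mul hcont
  have hlim : Tendsto (fun z : ℝ => T⁻¹ * exp (z • T)) atTop
      (𝓝 (0 : Matrix (Fin p) (Fin p) ℝ)) := by
    have h := hTend0.const_mul T⁻¹
    simpa using h
  have hFTC : ∫ z in Ioi (0 : ℝ), exp (z • T) = -T⁻¹ := by
    have h := integral_Ioi_of_hasDerivAt_of_tendsto (a := 0)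
      hcont2.continuousWithinAt (fun x _ => hder x) hInt hlim
    simpa using h
  have hneg : (-T)⁻¹ = -T⁻¹ :=
    Matrix.inv_eq_right_inv (by rw [neg_mul_neg, Matrix.mul_nonsing_inv T hdet])
  refine ⟨hunit, fun i j => (entryCLM i j).integrable_comp hInt, fun i j => ?_⟩
  have h := (entryCLM i j).integral_comp_comm hInt
  have h2 : ∀ M : Matrix (Fin p) (Fin p) ℝ, entryCLM i j M = M i j := fun _ => rfl
  calc ∫ z in Ioi (0 : ℝ), exp (z • T) i j
      = ∫ z in Ioi (0 : ℝ), entryCLM i j (exp (z • T)) := by simp [h2]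
    _ = entryCLM i j (∫ z in Ioi (0 : ℝ), exp (z • T)) := h
    _ = (-T)⁻¹ i j := by rw [hFTC, h2, hneg]

end IntegralMatrixExpAux

/-- If every complex eigenvalue of the real matrix `T` has strictly negative real part,
then `T` is invertible, `z ↦ exp(zT)` is entrywise integrable on `(0, ∞)`, and
`∫₀^∞ exp(zT) dz = (-T)⁻¹` entrywise. -/
theorem integral_matrix_exp {p : ℕ} (T : Matrix (Fin p) (Fin p) ℝ)
    (hT : ∀ μ ∈ spectrum ℂ (T.map (algebraMap ℝ ℂ)), μ.re < 0) :
    IsUnit T ∧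
    (∀ i j : Fin p,
      IntegrableOn (fun z : ℝ => NormedSpace.exp (z • T) i j) (Set.Ioi 0)) ∧
    ∀ i j : Fin p,
      ∫ z in Set.Ioi (0 : ℝ), NormedSpace.exp (z • T) i j = (-T)⁻¹ i j :=
  IntegralMatrixExpAux.main T hT
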